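/- Let τ ≥ 2. For every integer k ≥ 2 there exist a finite simple graph G and a configuration y of the conjunctive network with firing memory on G with uniform maximum delay dt_i = τ at every node i, such that y is periodic with minimal period exactly k·(τ + 1). -/

import Mathlib

open Classical in
/-- The conjunctive network on a finite simple graph `G`:
`F(x)_i = ⋀_{j adjacent to i} x_j`. -/
noncomputable def conjNet {V : Type*} [Fintype V] (G : SimpleGraph V)
    (x : V → Bool) : V → Bool :=
  fun i => if ∀ j, G.Adj i j → x j = true then true else false

/-- One step of the conjunctive network with firing memory on `G` with
maximum delays `dt`.  A configuration assigns to each node a pair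
`(xᵢ, Δᵢ)` of a Boolean state and a delay. -/
noncomputable def fmStep {V : Type*} [Fintype V] (G : SimpleGraph V) (dt : V → ℕ)
    (y : V → Bool × ℕ) : V → Bool × ℕ :=
  fun i =>
    let f := conjNet G (fun j => (y j).1) i
    let d : ℕ := if f = true then dt i else (y i).2 - 1
    (if 1 ≤ d then true else f, d)

/-! ### Auxiliary development -/

lemma conjNet_eq_true_iff {V : Type*} [Fintype V] (G : SimpleGraph V)
    (x : V → Bool) (i : V) :
    conjNet G x i = true ↔ ∀ j, G.Adj i j → x j = true := by
  unfold conjNet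
  split_ifs with h
  · exact iff_of_true rfl h
  · exact iff_of_false (by simp) h

lemma fmStep_apply {V : Type*} [Fintype V] (G : SimpleGraph V) (dt : V → ℕ)
    (y : V → Bool × ℕ) (i : V) :
    fmStep G dt y i =
      ((if 1 ≤ (if conjNet G (fun j => (y j).1) i = true then dt i else (y i).2 - 1) then true
        else conjNet G (fun j => (y j).1) i),
       (if conjNet G (fun j => (y j).1) i = true then dt i else (y i).2 - 1)) := rfl

/-- Transport of one `fmStep` along a graph-compatible equivalence. -/
lemma fmStep_comp {V W : Type*} [Fintype V] [Fintype W] (e : V ≃ W)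
    (G' : SimpleGraph V) (G : SimpleGraph W)
    (h : ∀ v w, G'.Adj v w ↔ G.Adj (e v) (e w)) (τ : ℕ) (z : W → Bool × ℕ) :
    fmStep G' (fun _ => τ) (fun v => z (e v)) = fun v => fmStep G (fun _ => τ) z (e v) := by
  funext v
  have hcond : (∀ j, G'.Adj v j → (z (e j)).1 = true)
      ↔ (∀ w, G.Adj (e v) w → (z w).1 = true) := by
    constructor
    · intro H w hw
      have hadj : G'.Adj v (e.symm w) := (h v (e.symm w)).mpr (by simpa using hw)
      simpa using H (e.symm w) hadj
    · intro H u hu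
      exact H (e u) ((h v u).mp hu)
  have hc : conjNet G' (fun j => ((fun v => z (e v)) j).1) v
      = conjNet G (fun j => (z j).1) (e v) := by
    unfold conjNet
    by_cases hp : ∀ (j : W), G.Adj (e v) j → (z j).1 = true
    · rw [if_pos (hcond.mpr hp), if_pos hp]
    · rw [if_neg (fun hc => hp (hcond.mp hc)), if_neg hp]
  rw [fmStep_apply, fmStep_apply, hc]

/-- Transport of iterated `fmStep` along a graph-compatible equivalence. -/
lemma fmStep_iter_comp {V W : Type*} [Fintype V] [Fintype W] (e : V ≃ W)
    (G' : SimpleGraph V) (G : SimpleGraph W)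
    (h : ∀ v w, G'.Adj v w ↔ G.Adj (e v) (e w)) (τ : ℕ) (z : W → Bool × ℕ) (t : ℕ) :
    (fmStep G' (fun _ => τ))^[t] (fun v => z (e v))
      = fun v => ((fmStep G (fun _ => τ))^[t] z) (e v) := by
  induction t with
  | zero => rfl
  | succ t ih =>
      simp only [Function.iterate_succ_apply']
      rw [ih]
      exact fmStep_comp e G' G h τ ((fmStep G (fun _ => τ))^[t] z)

/-- The order of the underlying cyclic group: `M = k (τ+1)`. -/
def FMM (τ k : ℕ) : ℕ := k * (τ + 1)

/-- The generating relation of the graph.  Vertices `(i, true)` form the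
"metronome" ring (circulant with connection set `{±1, …, ±τ}`), vertices
`(i, false)` form the "defect" ring (a cycle), and there are cross edges
`(i, false) ~ (i + a, true)` for `1 ≤ a ≤ τ - 1`. -/
def FMRel (τ k : ℕ) : ZMod (FMM τ k) × Bool → ZMod (FMM τ k) × Bool → Prop := fun v w =>
  (v.2 = true ∧ w.2 = true ∧ ∃ a : ℕ, 1 ≤ a ∧ a ≤ τ ∧ w.1 = v.1 + (a : ZMod (FMM τ k)))
  ∨ (v.2 = false ∧ w.2 = false ∧ w.1 = v.1 + 1)
  ∨ (v.2 = false ∧ w.2 = true ∧ ∃ a : ℕ, 1 ≤ a ∧ a ≤ τ - 1 ∧ w.1 = v.1 + (a : ZMod (FMM τ k)))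

/-- The graph of the construction. -/
def FMG (τ k : ℕ) : SimpleGraph (ZMod (FMM τ k) × Bool) := SimpleGraph.fromRel (FMRel τ k)

/-- The travelling-wave pattern.  The metronome ring carries the standard
wave of temporal period `τ+1`; the defect ring carries a single zero at
position `0`. -/
def FMPat (τ k : ℕ) : ZMod (FMM τ k) × Bool → Bool × ℕ
  | (i, true) =>
      if i.val % (τ + 1) = τ then (false, 0) else (true, τ - i.val % (τ + 1))
  | (i, false) =>
      if i = 0 then (false, 0)
      else (true, if i.val % (τ + 1) ≤ 1 then τ else (τ + 1) - i.val % (τ + 1))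

lemma FMRel_shift (τ k : ℕ) (a : ZMod (FMM τ k)) (i j : ZMod (FMM τ k)) (b c : Bool) :
    FMRel τ k (i + a, b) (j + a, c) ↔ FMRel τ k (i, b) (j, c) := by
  have key : ∀ (x y cc : ZMod (FMM τ k)),
      (y + a = x + a + cc) ↔ y = x + cc := by
    intro x y cc
    rw [add_right_comm]
    exact ⟨fun h => add_right_cancel h, fun h => by rw [h]⟩
  unfold FMRel
  dsimp only
  simp only [key]

lemma FMG_shift_adj (τ k : ℕ) (a : ZMod (FMM τ k)) (i j : ZMod (FMM τ k)) (b c : Bool) :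
    (FMG τ k).Adj (i + a, b) (j + a, c) ↔ (FMG τ k).Adj (i, b) (j, c) := by
  have hne : ((((i + a, b) : ZMod (FMM τ k) × Bool) ≠ (j + a, c)))
      ↔ ((((i, b) : ZMod (FMM τ k) × Bool) ≠ (j, c))) := by
    simp [Prod.ext_iff]
  unfold FMG
  rw [SimpleGraph.fromRel_adj, SimpleGraph.fromRel_adj, hne,
    FMRel_shift τ k a i j b c, FMRel_shift τ k a j i c b]

section Main

variable {τ k : ℕ}

lemma FM_step [NeZero (FMM τ k)] (hτ : 2 ≤ τ) (hk : 2 ≤ k) :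
    fmStep (FMG τ k) (fun _ => τ) (FMPat τ k)
      = fun v => FMPat τ k (v.1 + 1, v.2) := by
  have hMge : 2 * (τ + 1) ≤ FMM τ k := by
    unfold FMM; exact Nat.mul_le_mul_right _ hk
  have hTM : (τ + 1) ∣ FMM τ k := dvd_mul_left _ _
  -- basic cast facts
  have hvc : ∀ a : ℕ, a < FMM τ k → ((a : ZMod (FMM τ k))).val = a := by
    intro a ha; exact ZMod.val_cast_of_lt ha
  have hne0 : ∀ a : ℕ, 0 < a → a < FMM τ k → (a : ZMod (FMM τ k)) ≠ 0 := by
    intro a h1 h2 h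
    have h3 := congrArg ZMod.val h
    rw [hvc a h2, ZMod.val_zero] at h3
    omega
  have hone_ne : (1 : ZMod (FMM τ k)) ≠ 0 := by
    rw [← Nat.cast_one]
    exact hne0 1 (by omega) (by omega)
  have hvm : ∀ (x : ZMod (FMM τ k)) (a : ℕ),
      ((x + (a : ZMod (FMM τ k))).val) % (τ + 1) = (x.val + a) % (τ + 1) := by
    intro x a
    rw [ZMod.val_add, ZMod.val_natCast, Nat.mod_mod_of_dvd _ hTM, Nat.add_mod,
      Nat.mod_mod_of_dvd a hTM, ← Nat.add_mod]
  have hkey : ∀ (x : ZMod (FMM τ k)) (a : ℕ), a < τ + 1 →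
      ((x + (a : ZMod (FMM τ k))).val) % (τ + 1) = (x.val % (τ + 1) + a) % (τ + 1) := by
    intro x a ha
    rw [hvm, Nat.add_mod, Nat.mod_eq_of_lt ha]
  have haddone : ∀ x : ZMod (FMM τ k),
      (x + 1).val % (τ + 1) = (x.val % (τ + 1) + 1) % (τ + 1) := by
    intro x
    have h0 : (x + 1) = x + ((1 : ℕ) : ZMod (FMM τ k)) := by rw [Nat.cast_one]
    rw [h0, hkey x 1 (by omega)]
  have hmodlt : ∀ i : ZMod (FMM τ k), i.val % (τ + 1) < τ + 1 :=
    fun i => Nat.mod_lt _ (by omega)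
  -- x-components of the pattern
  have hXt : ∀ i : ZMod (FMM τ k),
      ((FMPat τ k (i, true)).1 = true ↔ i.val % (τ + 1) ≠ τ) := by
    intro i
    simp only [FMPat]
    by_cases h : i.val % (τ + 1) = τ
    · rw [if_pos h]; simp [h]
    · rw [if_neg h]; simp [h]
  have hXf : ∀ i : ZMod (FMM τ k), ((FMPat τ k (i, false)).1 = true ↔ i ≠ 0) := by
    intro i
    simp only [FMPat]
    by_cases h : i = 0
    · rw [if_pos h]; simp [h]
    · rw [if_neg h]; simp [h]
  -- pattern values
  have hPt : ∀ i : ZMod (FMM τ k), i.val % (τ + 1) ≠ τ →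
      FMPat τ k (i, true) = (true, τ - i.val % (τ + 1)) := by
    intro i h
    simp only [FMPat]
    rw [if_neg h]
  have hPtz : ∀ i : ZMod (FMM τ k), i.val % (τ + 1) = τ →
      FMPat τ k (i, true) = (false, 0) := by
    intro i h
    simp only [FMPat]
    rw [if_pos h]
  have hPf : ∀ i : ZMod (FMM τ k), i ≠ 0 →
      FMPat τ k (i, false)
        = (true, if i.val % (τ + 1) ≤ 1 then τ else (τ + 1) - i.val % (τ + 1)) := by
    intro i h
    simp only [FMPat]
    rw [if_neg h]
  have hPfz : FMPat τ k ((0 : ZMod (FMM τ k)), false) = (false, 0) := by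
    simp [FMPat]
  -- Claim A : firing pattern of metronome vertices
  have hA : ∀ i : ZMod (FMM τ k),
      (conjNet (FMG τ k) (fun j => (FMPat τ k j).1) (i, true) = true
        ↔ i.val % (τ + 1) = τ) := by
    intro i
    rw [conjNet_eq_true_iff]
    constructor
    · intro H
      by_contra hs
      have hslt : i.val % (τ + 1) < τ := by have := hmodlt i; omega
      have hadj : (FMG τ k).Adj (i, true)
          (i + ((τ - i.val % (τ + 1) : ℕ) : ZMod (FMM τ k)), true) := by
        unfold FMG
        rw [SimpleGraph.fromRel_adj]
        refine ⟨?_, Or.inl (Or.inl ⟨rfl, rfl, τ - i.val % (τ + 1), by omega, by omega, rfl⟩)⟩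
        intro hcon
        have h1 : i = i + ((τ - i.val % (τ + 1) : ℕ) : ZMod (FMM τ k)) :=
          congrArg Prod.fst hcon
        have h2 : ((τ - i.val % (τ + 1) : ℕ) : ZMod (FMM τ k)) = 0 :=
          add_eq_left.mp h1.symm
        exact hne0 (τ - i.val % (τ + 1)) (by omega) (by omega) h2
      have hw := H _ hadj
      rw [hXt] at hw
      apply hw
      rw [hkey i (τ - i.val % (τ + 1)) (by omega)]
      rw [show i.val % (τ + 1) + (τ - i.val % (τ + 1)) = τ from by omega]
      exact Nat.mod_eq_of_lt (by omega)
    · intro hs w hadj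
      obtain ⟨w1, w2⟩ := w
      unfold FMG at hadj
      rw [SimpleGraph.fromRel_adj] at hadj
      obtain ⟨hne, hr⟩ := hadj
      rcases hr with (⟨hv2, hw2, a, ha1, ha2, ha3⟩ | ⟨hv2, _, _⟩ | ⟨hv2, _, _⟩)
        | (⟨hw2, hv2, a, ha1, ha2, ha3⟩ | ⟨_, hv2, _⟩ | ⟨hw2, hv2, a, ha1, ha2, ha3⟩)
      · -- w = (i + a, true), 1 ≤ a ≤ τ
        dsimp only at hw2 ha3
        subst hw2
        rw [hXt, ha3, hkey i a (by omega), hs]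
        rw [show τ + a = (τ + 1) + (a - 1) from by omega, Nat.add_mod_left,
          Nat.mod_eq_of_lt (by omega)]
        omega
      · simp at hv2
      · simp at hv2
      · -- w = (j, true) with i = j + a
        dsimp only at hw2 ha3
        subst hw2
        rw [hXt]
        intro hu
        have hval : (w1 + (a : ZMod (FMM τ k))).val % (τ + 1) = τ := by
          rw [← ha3]; exact hs
        rw [hkey w1 a (by omega), hu,
          show τ + a = (τ + 1) + (a - 1) from by omega, Nat.add_mod_left,
          Nat.mod_eq_of_lt (by omega)] at hval
        omega
      · simp at hv2
      · -- w = (j, false) with i = j + a, 1 ≤ a ≤ τ - 1 (cross edge)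
        dsimp only at hw2 ha3
        subst hw2
        rw [hXf]
        intro h0
        subst h0
        have hia : i = (a : ZMod (FMM τ k)) := by
          rw [zero_add] at ha3; exact ha3
        rw [hia, hvc a (by omega), Nat.mod_eq_of_lt (by omega)] at hs
        omega
  -- Claim B : firing pattern of defect vertices
  have hB : ∀ i : ZMod (FMM τ k),
      (conjNet (FMG τ k) (fun j => (FMPat τ k j).1) (i, false) = true
        ↔ (i + 1 ≠ 0 ∧ i ≠ 1 ∧ (i.val % (τ + 1) = 0 ∨ i.val % (τ + 1) = τ))) := by
    intro i
    rw [conjNet_eq_true_iff]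
    constructor
    · intro H
      refine ⟨?_, ?_, ?_⟩
      · -- the successor neighbour forces i + 1 ≠ 0
        have hadj : (FMG τ k).Adj (i, false) (i + 1, false) := by
          unfold FMG
          rw [SimpleGraph.fromRel_adj]
          refine ⟨?_, Or.inl (Or.inr (Or.inl ⟨rfl, rfl, rfl⟩))⟩
          intro hcon
          have h1 : i = i + 1 := congrArg Prod.fst hcon
          exact hone_ne (add_eq_left.mp h1.symm)
        have hw := H _ hadj
        rw [hXf] at hw
        exact hw
      · -- the predecessor neighbour forces i ≠ 1
        have hadj : (FMG τ k).Adj (i, false) (i - 1, false) := by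
          unfold FMG
          rw [SimpleGraph.fromRel_adj]
          refine ⟨?_, Or.inr (Or.inr (Or.inl
            ⟨rfl, rfl, show (i : ZMod (FMM τ k)) = i - 1 + 1 by ring⟩))⟩
          intro hcon
          have h1 : i = i - 1 := congrArg Prod.fst hcon
          have h2 : (1 : ZMod (FMM τ k)) = 0 := by linear_combination h1
          exact hone_ne h2
        have hw := H _ hadj
        rw [hXf] at hw
        intro hi1
        apply hw
        rw [hi1, sub_self]
      · -- the cross neighbours force the residue condition
        by_contra hs
        push_neg at hs
        obtain ⟨hs0, hsτ⟩ := hs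
        have hslt := hmodlt i
        have hadj : (FMG τ k).Adj (i, false)
            (i + ((τ - i.val % (τ + 1) : ℕ) : ZMod (FMM τ k)), true) := by
          unfold FMG
          rw [SimpleGraph.fromRel_adj]
          refine ⟨?_, Or.inl (Or.inr (Or.inr
            ⟨rfl, rfl, τ - i.val % (τ + 1), by omega, by omega, rfl⟩))⟩
          intro hcon
          have h2 := congrArg Prod.snd hcon
          simp at h2
        have hw := H _ hadj
        rw [hXt] at hw
        apply hw
        rw [hkey i (τ - i.val % (τ + 1)) (by omega)]
        rw [show i.val % (τ + 1) + (τ - i.val % (τ + 1)) = τ from by omega]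
        exact Nat.mod_eq_of_lt (by omega)
    · rintro ⟨h1, h2, h3⟩ w hadj
      obtain ⟨w1, w2⟩ := w
      unfold FMG at hadj
      rw [SimpleGraph.fromRel_adj] at hadj
      obtain ⟨hne, hr⟩ := hadj
      rcases hr with (⟨hv2, _, _⟩ | ⟨hv2, hw2, ha3⟩ | ⟨hv2, hw2, a, ha1, ha2, ha3⟩)
        | (⟨hw2, hv2, _, _, _, _⟩ | ⟨hw2, hv2, ha3⟩ | ⟨hw2, hv2, _⟩)
      · simp at hv2
      · -- w = (i + 1, false)
        dsimp only at hw2 ha3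
        subst hw2
        rw [hXf, ha3]
        exact h1
      · -- w = (i + a, true), 1 ≤ a ≤ τ - 1
        dsimp only at hw2 ha3
        subst hw2
        rw [hXt, ha3, hkey i a (by omega)]
        rcases h3 with h3 | h3
        · rw [h3, Nat.zero_add, Nat.mod_eq_of_lt (by omega)]
          omega
        · rw [h3, show τ + a = (τ + 1) + (a - 1) from by omega, Nat.add_mod_left,
            Nat.mod_eq_of_lt (by omega)]
          omega
      · simp at hv2
      · -- w = (j, false) with i = j + 1
        dsimp only at hw2 ha3
        subst hw2
        rw [hXf]
        intro hw0
        apply h2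
        rw [ha3, hw0, zero_add]
      · simp at hv2
  -- the pointwise computation
  funext v
  obtain ⟨i, b⟩ := v
  show fmStep (FMG τ k) (fun _ => τ) (FMPat τ k) (i, b) = FMPat τ k (i + 1, b)
  cases b with
  | true =>
      by_cases hs : i.val % (τ + 1) = τ
      · -- the vertex fires
        have hf := (hA i).mpr hs
        rw [fmStep_apply, hf, if_pos (show (true : Bool) = true from rfl),
          if_pos (show (1 : ℕ) ≤ τ from by omega)]
        have hnext : (i + 1).val % (τ + 1) = 0 := by
          rw [haddone i, hs, Nat.mod_self]
        rw [hPt (i + 1) (by rw [hnext]; omega), hnext, Nat.sub_zero]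
      · -- the countdown is running
        have hf : conjNet (FMG τ k) (fun j => (FMPat τ k j).1) (i, true) = false := by
          cases hcb : conjNet (FMG τ k) (fun j => (FMPat τ k j).1) (i, true) with
          | false => rfl
          | true => exact absurd ((hA i).mp hcb) hs
        have hval : (FMPat τ k (i, true)).2 = τ - i.val % (τ + 1) := by
          rw [hPt i hs]
        have hslt := hmodlt i
        have hnext : (i + 1).val % (τ + 1) = i.val % (τ + 1) + 1 := by
          rw [haddone i]
          exact Nat.mod_eq_of_lt (by omega)
        rw [fmStep_apply, hf, if_neg (show ¬((false : Bool) = true) from by simp), hval]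
        by_cases hs1 : i.val % (τ + 1) = τ - 1
        · -- the countdown expires
          rw [show τ - i.val % (τ + 1) - 1 = 0 from by omega,
            if_neg (show ¬((1 : ℕ) ≤ 0) from by omega)]
          rw [hPtz (i + 1) (by rw [hnext]; omega)]
        · -- the countdown continues
          rw [if_pos (show 1 ≤ τ - i.val % (τ + 1) - 1 from by omega)]
          rw [hPt (i + 1) (by rw [hnext]; omega), hnext]
          rw [show τ - (i.val % (τ + 1) + 1) = τ - i.val % (τ + 1) - 1 from by omega]
  | false =>
      by_cases hi0 : i = 0
      · -- the defect vertex itself : it fires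
        subst hi0
        have hz1 : (0 : ZMod (FMM τ k)) + 1 ≠ 0 := by rw [zero_add]; exact hone_ne
        have hf := (hB 0).mpr ⟨hz1, fun h => hone_ne h.symm,
          Or.inl (by rw [ZMod.val_zero, Nat.zero_mod])⟩
        rw [fmStep_apply, hf, if_pos (show (true : Bool) = true from rfl),
          if_pos (show (1 : ℕ) ≤ τ from by omega)]
        have hv1 : ((0 : ZMod (FMM τ k)) + 1).val % (τ + 1) = 1 := by
          rw [haddone 0, ZMod.val_zero, Nat.zero_mod, Nat.zero_add]
          exact Nat.mod_eq_of_lt (by omega)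
        rw [hPf _ hz1, hv1, if_pos (le_refl 1)]
      · by_cases hi1 : i = 1
        · -- the left neighbour of the defect
          subst hi1
          have hf : conjNet (FMG τ k) (fun j => (FMPat τ k j).1) (1, false) = false := by
            cases hcb : conjNet (FMG τ k) (fun j => (FMPat τ k j).1) (1, false) with
            | false => rfl
            | true =>
                obtain ⟨_, h2, _⟩ := (hB 1).mp hcb
                exact absurd rfl h2
          have hval1 : (1 : ZMod (FMM τ k)).val = 1 := by
            rw [← Nat.cast_one]; exact hvc 1 (by omega)
          have hmod1 : (1 : ZMod (FMM τ k)).val % (τ + 1) = 1 := by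
            rw [hval1]; exact Nat.mod_eq_of_lt (by omega)
          have hd : (FMPat τ k ((1 : ZMod (FMM τ k)), false)).2 = τ := by
            rw [hPf 1 hone_ne, hmod1, if_pos (le_refl 1)]
          rw [fmStep_apply, hf, if_neg (show ¬((false : Bool) = true) from by simp), hd,
            if_pos (show 1 ≤ τ - 1 from by omega)]
          have h2ne : (1 : ZMod (FMM τ k)) + 1 ≠ 0 := by
            rw [show (1 : ZMod (FMM τ k)) + 1 = ((2 : ℕ) : ZMod (FMM τ k)) from by
              push_cast; ring]
            exact hne0 2 (by omega) (by omega)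
          have hmod2 : ((1 : ZMod (FMM τ k)) + 1).val % (τ + 1) = 2 := by
            rw [haddone 1, hmod1]
            exact Nat.mod_eq_of_lt (by omega)
          rw [hPf _ h2ne, hmod2, if_neg (show ¬((2 : ℕ) ≤ 1) from by omega),
            show τ + 1 - 2 = τ - 1 from by omega]
        · by_cases hiM : i + 1 = 0
          · -- the right neighbour of the defect : it turns into the defect
            have h0 : (i + 1).val = 0 := by rw [hiM]; exact ZMod.val_zero
            have h1 : (i.val % (τ + 1) + 1) % (τ + 1) = 0 := by
              rw [← haddone i, h0, Nat.zero_mod]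
            have hslt := hmodlt i
            have hsτ : i.val % (τ + 1) = τ := by
              by_contra hne
              rw [Nat.mod_eq_of_lt (by omega)] at h1
              omega
            have hf : conjNet (FMG τ k) (fun j => (FMPat τ k j).1) (i, false) = false := by
              cases hcb : conjNet (FMG τ k) (fun j => (FMPat τ k j).1) (i, false) with
              | false => rfl
              | true =>
                  obtain ⟨h1', _, _⟩ := (hB i).mp hcb
                  exact absurd hiM h1'
            have hd : (FMPat τ k (i, false)).2 = 1 := by
              rw [hPf i hi0, hsτ, if_neg (show ¬(τ ≤ 1) from by omega)]
              show τ + 1 - τ = 1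
              omega
            rw [fmStep_apply, hf, if_neg (show ¬((false : Bool) = true) from by simp), hd,
              if_neg (show ¬((1 : ℕ) ≤ 1 - 1) from by omega)]
            rw [hiM, hPfz]
          · -- a generic vertex of the defect ring
            have hslt := hmodlt i
            by_cases hs0 : i.val % (τ + 1) = 0
            · have hf := (hB i).mpr ⟨hiM, hi1, Or.inl hs0⟩
              rw [fmStep_apply, hf, if_pos (show (true : Bool) = true from rfl),
                if_pos (show (1 : ℕ) ≤ τ from by omega)]
              have hmod1 : (i + 1).val % (τ + 1) = 1 := by
                rw [haddone i, hs0, Nat.zero_add]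
                exact Nat.mod_eq_of_lt (by omega)
              rw [hPf _ hiM, hmod1, if_pos (le_refl 1)]
            · by_cases hsτ : i.val % (τ + 1) = τ
              · have hf := (hB i).mpr ⟨hiM, hi1, Or.inr hsτ⟩
                rw [fmStep_apply, hf, if_pos (show (true : Bool) = true from rfl),
                  if_pos (show (1 : ℕ) ≤ τ from by omega)]
                have hmod0 : (i + 1).val % (τ + 1) = 0 := by
                  rw [haddone i, hsτ, Nat.mod_self]
                rw [hPf _ hiM, hmod0, if_pos (show (0 : ℕ) ≤ 1 from by omega)]
              · -- 1 ≤ s ≤ τ - 1 : countdown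
                have hf : conjNet (FMG τ k) (fun j => (FMPat τ k j).1) (i, false)
                    = false := by
                  cases hcb : conjNet (FMG τ k) (fun j => (FMPat τ k j).1) (i, false) with
                  | false => rfl
                  | true =>
                      obtain ⟨_, _, h3⟩ := (hB i).mp hcb
                      rcases h3 with h3 | h3
                      · exact absurd h3 hs0
                      · exact absurd h3 hsτ
                have hd : (FMPat τ k (i, false)).2 - 1 = τ - i.val % (τ + 1) := by
                  rw [hPf i hi0]
                  show (if i.val % (τ + 1) ≤ 1 then τ else τ + 1 - i.val % (τ + 1)) - 1
                      = τ - i.val % (τ + 1)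
                  split_ifs with h
                  · omega
                  · omega
                rw [fmStep_apply, hf,
                  if_neg (show ¬((false : Bool) = true) from by simp), hd,
                  if_pos (show 1 ≤ τ - i.val % (τ + 1) from by omega)]
                have hmods : (i + 1).val % (τ + 1) = i.val % (τ + 1) + 1 := by
                  rw [haddone i]
                  exact Nat.mod_eq_of_lt (by omega)
                rw [hPf _ hiM, hmods,
                  if_neg (show ¬(i.val % (τ + 1) + 1 ≤ 1) from by omega),
                  show τ + 1 - (i.val % (τ + 1) + 1) = τ - i.val % (τ + 1) from by omega]

lemma FM_iter [NeZero (FMM τ k)] (hτ : 2 ≤ τ) (hk : 2 ≤ k) (t : ℕ) :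
    (fmStep (FMG τ k) (fun _ => τ))^[t] (FMPat τ k)
      = fun v => FMPat τ k (v.1 + ((t : ℕ) : ZMod (FMM τ k)), v.2) := by
  induction t with
  | zero =>
      rw [Function.iterate_zero_apply]
      funext v
      rw [Nat.cast_zero, add_zero, Prod.mk.eta]
  | succ t ih =>
      rw [Function.iterate_succ_apply', ih]
      let e : (ZMod (FMM τ k) × Bool) ≃ (ZMod (FMM τ k) × Bool) :=
        (Equiv.addRight ((t : ℕ) : ZMod (FMM τ k))).prodCongr (Equiv.refl Bool)
      have hcompat : ∀ v w : ZMod (FMM τ k) × Bool,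
          (FMG τ k).Adj v w ↔ (FMG τ k).Adj (e v) (e w) := by
        intro v w
        exact (FMG_shift_adj τ k ((t : ℕ) : ZMod (FMM τ k)) v.1 w.1 v.2 w.2).symm
      have hstep := fmStep_comp e (FMG τ k) (FMG τ k) hcompat τ (FMPat τ k)
      rw [FM_step hτ hk] at hstep
      have hfun : (fun v : ZMod (FMM τ k) × Bool => FMPat τ k (e v))
          = fun v : ZMod (FMM τ k) × Bool =>
              FMPat τ k (v.1 + ((t : ℕ) : ZMod (FMM τ k)), v.2) := rfl
      rw [hfun] at hstep
      rw [hstep]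
      funext v
      show FMPat τ k (v.1 + ((t : ℕ) : ZMod (FMM τ k)) + 1, v.2)
          = FMPat τ k (v.1 + (((t + 1 : ℕ)) : ZMod (FMM τ k)), v.2)
      rw [show v.1 + ((t : ℕ) : ZMod (FMM τ k)) + 1
          = v.1 + (((t + 1 : ℕ)) : ZMod (FMM τ k)) from by push_cast; ring]

end Main

/-- for every `τ ≥ 2` and every `k ≥ 2` there is a conjunctive
network with firing memory with uniform maximum delay `τ` admitting an
attractor of minimal period exactly `k (τ + 1)`. -/
theorem uniform_delay_period_multiple (τ : ℕ) (hτ : 2 ≤ τ) (k : ℕ) (hk : 2 ≤ k) :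
    ∃ (n : ℕ) (G : SimpleGraph (Fin n)) (y : Fin n → Bool × ℕ),
      Function.IsPeriodicPt (fmStep G (fun _ => τ)) (k * (τ + 1)) y ∧
      Function.minimalPeriod (fmStep G (fun _ => τ)) y = k * (τ + 1) := by
  have hM0 : 0 < k * (τ + 1) := Nat.mul_pos (by omega) (by omega)
  haveI : NeZero (FMM τ k) := ⟨Nat.mul_ne_zero (by omega) (by omega)⟩
  have ecard : Fintype.card (Fin (2 * FMM τ k)) = Fintype.card (ZMod (FMM τ k) × Bool) := by
    rw [Fintype.card_fin, Fintype.card_prod, ZMod.card, Fintype.card_bool]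
    ring
  let e : Fin (2 * FMM τ k) ≃ ZMod (FMM τ k) × Bool := Fintype.equivOfCardEq ecard
  let G' : SimpleGraph (Fin (2 * FMM τ k)) :=
    { Adj := fun v w => (FMG τ k).Adj (e v) (e w)
      symm := ⟨fun v w h => (FMG τ k).adj_symm h⟩
      loopless := ⟨fun v h => (FMG τ k).irrefl h⟩ }
  have hiter : ∀ t : ℕ, (fmStep G' (fun _ => τ))^[t] (fun v => FMPat τ k (e v))
      = fun v => FMPat τ k ((e v).1 + ((t : ℕ) : ZMod (FMM τ k)), (e v).2) := by
    intro t
    funext v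
    have h1 := congrFun (fmStep_iter_comp e G' (FMG τ k) (fun _ _ => Iff.rfl) τ
      (FMPat τ k) t) v
    rw [h1, FM_iter hτ hk t]
  have hcastne : ∀ t : ℕ, 0 < t → t < k * (τ + 1) → ((t : ℕ) : ZMod (FMM τ k)) ≠ 0 := by
    intro t h1 h2 hc
    have h3 := congrArg ZMod.val hc
    rw [ZMod.val_cast_of_lt (show t < FMM τ k from h2), ZMod.val_zero] at h3
    omega
  have hper : Function.IsPeriodicPt (fmStep G' (fun _ => τ)) (k * (τ + 1))
      (fun v => FMPat τ k (e v)) := by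
    show (fmStep G' (fun _ => τ))^[k * (τ + 1)] (fun v => FMPat τ k (e v))
        = fun v => FMPat τ k (e v)
    rw [hiter (k * (τ + 1))]
    funext v
    rw [show (((k * (τ + 1) : ℕ)) : ZMod (FMM τ k)) = 0 from ZMod.natCast_self (FMM τ k),
      add_zero, Prod.mk.eta]
  have hnoteq : ∀ t : ℕ, 0 < t → t < k * (τ + 1) →
      (fmStep G' (fun _ => τ))^[t] (fun v => FMPat τ k (e v))
        ≠ fun v => FMPat τ k (e v) := by
    intro t h1 h2 heq
    rw [hiter t] at heq
    have h3 := congrFun heq (e.symm ((0 : ZMod (FMM τ k)), false))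
    rw [Equiv.apply_symm_apply] at h3
    have h3' : FMPat τ k ((0 : ZMod (FMM τ k)) + ((t : ℕ) : ZMod (FMM τ k)), false)
        = FMPat τ k ((0 : ZMod (FMM τ k)), false) := h3
    have h4 := congrArg Prod.fst h3'
    have h5 : ((0 : ZMod (FMM τ k)) + ((t : ℕ) : ZMod (FMM τ k))) ≠ 0 := by
      rw [zero_add]; exact hcastne t h1 h2
    have h6 : (FMPat τ k (((0 : ZMod (FMM τ k)) + ((t : ℕ) : ZMod (FMM τ k))), false)).1
        = true := by
      simp only [FMPat]
      rw [if_neg h5]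
    have h7 : (FMPat τ k ((0 : ZMod (FMM τ k)), false)).1 = false := by
      simp [FMPat]
    rw [h6, h7] at h4
    exact absurd h4 (by simp)
  refine ⟨2 * FMM τ k, G', fun v => FMPat τ k (e v), hper, ?_⟩
  have hpos : 0 < Function.minimalPeriod (fmStep G' (fun _ => τ))
      (fun v => FMPat τ k (e v)) :=
    Function.minimalPeriod_pos_of_mem_periodicPts
      (Function.mem_periodicPts.mpr ⟨k * (τ + 1), hM0, hper⟩)
  have hdvd := Function.IsPeriodicPt.minimalPeriod_dvd hper
  have hle : Function.minimalPeriod (fmStep G' (fun _ => τ)) (fun v => FMPat τ k (e v))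
      ≤ k * (τ + 1) := Nat.le_of_dvd hM0 hdvd
  rcases lt_or_eq_of_le hle with hlt | heq
  · exact absurd (Function.isPeriodicPt_minimalPeriod (fmStep G' (fun _ => τ))
      (fun v => FMPat τ k (e v))) (hnoteq _ hpos hlt)
  · exact heq
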